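/- Let η_c, η_d ∈ (0,1) be charge and discharge efficiencies and p : {1,...,T} → ℝ prices, and let the arbitrage profit of a pair (c, d) be J(c, d) = Σ_{t=1}^{T} p_t (η_d · d_t − c_t / η_c). Suppose (c, d) is feasible and there is a time s with p_s > 0, c_s > 0 and d_s > 0. Define (c', d') by c'_s = c_s − δ, d'_s = d_s − δ with δ = min(c_s, d_s), and c'_t = c_t, d'_t = d_t for all t ≠ s. Then (c', d') is feasible, induces the same energy levels as (c, d) at every time, and J(c', d') > J(c, d). -/

import Mathlib

/-- Energy level at time `t` induced by charge profile `c` and discharge profile `d`,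
starting from initial level `E0`. -/
def Elevel (E0 : ℝ) (c d : ℕ → ℝ) (t : ℕ) : ℝ :=
  E0 + ∑ s ∈ Finset.Icc 1 t, (c s - d s)

/-- Feasibility of a pair of charge/discharge profiles over horizon `{1,...,T}`. -/
def Feasible (T : ℕ) (E0 Emin Emax Cmax Dmax : ℝ) (c d : ℕ → ℝ) : Prop :=
  (∀ t ∈ Finset.Icc 1 T, 0 ≤ c t ∧ c t ≤ Cmax ∧ 0 ≤ d t ∧ d t ≤ Dmax) ∧
  (∀ t ∈ Finset.Icc 1 T, Emin ≤ Elevel E0 c d t ∧ Elevel E0 c d t ≤ Emax)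

/-- Arbitrage profit of the pair `(c, d)` under prices `p` with efficiencies `ηc, ηd`. -/
noncomputable def Profit (T : ℕ) (ηc ηd : ℝ) (p c d : ℕ → ℝ) : ℝ :=
  ∑ t ∈ Finset.Icc 1 T, p t * (ηd * d t - c t / ηc)

theorem stmt1 (T : ℕ) (hT : 0 < T) (E0 Emin Emax Cmax Dmax : ℝ)
    (hE0l : Emin ≤ E0) (hE0u : E0 ≤ Emax) (hC : 0 ≤ Cmax) (hD : 0 ≤ Dmax)
    (ηc ηd : ℝ) (hηc : ηc ∈ Set.Ioo (0:ℝ) 1) (hηd : ηd ∈ Set.Ioo (0:ℝ) 1)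
    (p c d : ℕ → ℝ)
    (hfeas : Feasible T E0 Emin Emax Cmax Dmax c d)
    (s : ℕ) (hs : s ∈ Finset.Icc 1 T) (hps : 0 < p s) (hcs : 0 < c s) (hds : 0 < d s)
    (c' d' : ℕ → ℝ)
    (hc' : c' = fun t => if t = s then c s - min (c s) (d s) else c t)
    (hd' : d' = fun t => if t = s then d s - min (c s) (d s) else d t) :
    Feasible T E0 Emin Emax Cmax Dmax c' d' ∧
      (∀ t ≤ T, Elevel E0 c' d' t = Elevel E0 c d t) ∧
      Profit T ηc ηd p c d < Profit T ηc ηd p c' d' := by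
  obtain ⟨hbd, hlev⟩ := hfeas
  have hdiff : ∀ t, c' t - d' t = c t - d t := by
    intro t
    subst hc' hd'
    by_cases h : t = s <;> simp [h] <;> ring
  have hElev : ∀ t, Elevel E0 c' d' t = Elevel E0 c d t := by
    intro t
    unfold Elevel
    rw [Finset.sum_congr rfl (fun x _ => hdiff x)]
  refine ⟨⟨?_, ?_⟩, fun t _ => hElev t, ?_⟩
  · intro t ht
    obtain ⟨h1, h2, h3, h4⟩ := hbd t ht
    subst hc' hd'
    by_cases h : t = s
    · subst h
      have hmc : min (c t) (d t) ≤ c t := min_le_left _ _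
      have hmd : min (c t) (d t) ≤ d t := min_le_right _ _
      have hm0 : 0 ≤ min (c t) (d t) := le_min h1 h3
      refine ⟨?_, ?_, ?_, ?_⟩ <;> simp only [eq_self_iff_true, if_true] <;> linarith
    · simp only [if_neg h]
      exact ⟨h1, h2, h3, h4⟩
  · intro t ht
    rw [hElev t]
    exact hlev t ht
  · unfold Profit
    rw [← sub_pos, ← Finset.sum_sub_distrib]
    have hδ : 0 < min (c s) (d s) := lt_min hcs hds
    have key : ∀ t ∈ Finset.Icc 1 T,
        p t * (ηd * d' t - c' t / ηc) - p t * (ηd * d t - c t / ηc)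
          = if t = s then p s * (min (c s) (d s)) * (1/ηc - ηd) else 0 := by
      intro t _
      subst hc' hd'
      by_cases h : t = s
      · subst h; simp only [if_pos rfl, if_true]; field_simp; ring
      · simp [h]
    rw [Finset.sum_congr rfl key, Finset.sum_ite_eq' _ s, if_pos hs]
    have h1 : ηd < 1 / ηc := by
      have : (1:ℝ) < 1 / ηc := by
        rw [lt_div_iff₀ hηc.1]; linarith [hηc.2]
      linarith [hηd.2]
    have := mul_pos hps hδ
    nlinarith
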